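/- For integers m ≥ 1 and z ≠ 0, the contiguity relation m·𝐃_m(z) = 𝐃_{m−1}(z) − z·𝐃_{m+1}(z) holds. -/

import Mathlib

open Complex

/-- The _root_.digamma function `ψ = Γ'/Γ`. -/
noncomputable def digamma (z : ℂ) : ℂ := deriv Complex.Gamma z / Complex.Gamma z

/-- The normalized ₀F₁ function with integer parameter: `𝐅_m(z) = ∑ zⁿ/((m+n)!·n!)`. -/
noncomputable def Fm (m : ℕ) (z : ℂ) : ℂ :=
  ∑' n : ℕ, z ^ n / ((m + n).factorial * n.factorial)

/-- `𝐃_m(z) = ∑_{k=1}^m (−1)^{k−1}(k−1)!/(m−k)!·z^{−k}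
      − ∑_{k≥0} (ψ(k+1)+ψ(k+m+1))/(k!(m+k)!)·z^k`. -/
noncomputable def Dm (m : ℕ) (z : ℂ) : ℂ :=
  (∑ k ∈ Finset.Icc 1 m,
      (-1 : ℂ) ^ (k - 1) * (k - 1).factorial / (m - k).factorial * z ^ (-(k : ℤ)))
  - ∑' k : ℕ, (_root_.digamma (k + 1) + _root_.digamma (k + m + 1)) / (k.factorial * (m + k).factorial) * z ^ k

/- ### Auxiliary lemmas -/

lemma DJA.ne_neg_nat (x : ℂ) (hx : 0 < x.re) : ∀ m : ℕ, x ≠ -m := by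
  intro m h
  have : x.re = -(m:ℝ) := by rw [h]; simp
  simp [this] at hx
  linarith [hx, Nat.cast_nonneg (α := ℝ) m]

lemma DJA.digamma_rec (x : ℂ) (hx : 0 < x.re) : _root_.digamma (x + 1) = _root_.digamma x + 1 / x := by
  have hx0 : x ≠ 0 := by intro h; simp [h] at hx
  have hne : ∀ m : ℕ, x ≠ -m := DJA.ne_neg_nat x hx
  have hd : DifferentiableAt ℂ Complex.Gamma x := Complex.differentiableAt_Gamma x hne
  have hG : Complex.Gamma x ≠ 0 := Complex.Gamma_ne_zero hne
  have heq : (fun z => Complex.Gamma (z + 1)) =ᶠ[nhds x] fun z => z * Complex.Gamma z := by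
    filter_upwards [IsOpen.mem_nhds isOpen_ne (show x ≠ 0 from hx0)] with z hz
    exact Complex.Gamma_add_one z hz
  have h1 : deriv (fun z => Complex.Gamma (z + 1)) x = deriv Complex.Gamma (x + 1) :=
    deriv_comp_add_const _ 1 x
  have h2 : deriv (fun z => z * Complex.Gamma z) x
      = Complex.Gamma x + x * deriv Complex.Gamma x := by
    rw [deriv_fun_mul (c := fun z => z) differentiableAt_id hd]; simp [mul_comm]
  have h3 : deriv Complex.Gamma (x + 1) = Complex.Gamma x + x * deriv Complex.Gamma x := by
    rw [← h1, heq.deriv_eq, h2]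
  unfold _root_.digamma
  rw [h3, Complex.Gamma_add_one x hx0]
  field_simp
  ring

lemma DJA.digamma_rec_nat (n : ℕ) (hn : 1 ≤ n) :
    _root_.digamma ((n : ℂ) + 1) = _root_.digamma n + 1 / n :=
  DJA.digamma_rec n (by simp; omega)

lemma DJA.digamma_growth (n : ℕ) (hn : 1 ≤ n) :
    ‖_root_.digamma (n : ℂ)‖ ≤ ‖_root_.digamma 1‖ + n := by
  induction n, hn using Nat.le_induction with
  | base => simp
  | succ n hn ih =>
    have h := DJA.digamma_rec_nat n hn
    push_cast
    calc ‖_root_.digamma ((n:ℂ) + 1)‖ = ‖_root_.digamma n + 1/n‖ := by rw [h]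
      _ ≤ ‖_root_.digamma (n:ℂ)‖ + ‖(1:ℂ)/n‖ := norm_add_le _ _
      _ ≤ (‖_root_.digamma 1‖ + n) + 1 := by
          refine add_le_add ih ?_
          rw [norm_div, norm_one]
          simp only [Complex.norm_natCast]
          rw [div_le_one (by exact_mod_cast hn.trans_lt' (by norm_num) : (0:ℝ) < n)]
          exact_mod_cast hn
      _ = ‖_root_.digamma 1‖ + (n + 1) := by ring

lemma DJA.summable_a (m : ℕ) (z : ℂ) :
    Summable (fun k : ℕ => (_root_.digamma (k + 1) + _root_.digamma (k + m + 1)) /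
      (k.factorial * (m + k).factorial) * z ^ k) := by
  set C := ‖_root_.digamma 1‖ with hC
  have hC0 : 0 ≤ C := norm_nonneg _
  apply Summable.of_norm_bounded
    (g := fun k : ℕ => (2*C + m + 4) * ((2*‖z‖) ^ k / k.factorial))
    ((Real.summable_pow_div_factorial (2*‖z‖)).mul_left _)
  intro k
  have h1 : ‖_root_.digamma ((k:ℂ) + 1)‖ ≤ C + (k+1) := by
    have := DJA.digamma_growth (k+1) (by omega); push_cast at this ⊢; linarith
  have h2 : ‖_root_.digamma ((k:ℂ) + m + 1)‖ ≤ C + (k+m+1) := by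
    have := DJA.digamma_growth (k+m+1) (by omega); push_cast at this ⊢; linarith
  have hfac : (1:ℝ) ≤ (m+k).factorial := by
    exact_mod_cast Nat.one_le_iff_ne_zero.mpr (Nat.factorial_ne_zero _)
  have hkfac : (0:ℝ) < k.factorial := by exact_mod_cast Nat.factorial_pos k
  have hnorm : ‖(_root_.digamma (k + 1) + _root_.digamma (k + m + 1)) /
      ((k.factorial : ℂ) * (m + k).factorial) * z ^ k‖
      ≤ (2*C + m + 2 + 2*k) / k.factorial * ‖z‖ ^ k := by
    rw [norm_mul, norm_div, norm_pow]
    refine mul_le_mul_of_nonneg_right (div_le_div₀ (by positivity) ?_ hkfac ?_) (by positivity)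
    · calc ‖_root_.digamma ((k:ℂ) + 1) + _root_.digamma ((k:ℂ) + m + 1)‖
          ≤ ‖_root_.digamma ((k:ℂ) + 1)‖ + ‖_root_.digamma ((k:ℂ) + m + 1)‖ := norm_add_le _ _
        _ ≤ 2*C + m + 2 + 2*k := by linarith
    · rw [norm_mul]
      simp only [Complex.norm_natCast]
      calc (k.factorial : ℝ) = k.factorial * 1 := by ring
        _ ≤ k.factorial * (m+k).factorial := by gcongr
  refine hnorm.trans ?_
  have hk2 : (k:ℝ) ≤ 2 ^ k := by exact_mod_cast (Nat.lt_two_pow_self (n := k)).le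
  have h2k : (1:ℝ) ≤ 2 ^ k := one_le_pow₀ (by norm_num)
  have hX : (0:ℝ) ≤ ‖z‖ ^ k := by positivity
  have hmp : (2*‖z‖)^k = 2^k * ‖z‖^k := mul_pow 2 ‖z‖ k
  rw [hmp, div_mul_eq_mul_div, ← mul_div_assoc]
  rw [div_le_div_iff_of_pos_right hkfac]
  nlinarith [mul_le_mul_of_nonneg_right hk2 hX,
    mul_le_mul_of_nonneg_left h2k (by linarith : (0:ℝ) ≤ 2*C + m + 2)]

/- ### Pieces of Dm -/

noncomputable def DJA.SS (z : ℂ) (p : ℕ) : ℂ :=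
  ∑ k ∈ Finset.Icc 1 p,
    (-1 : ℂ) ^ (k - 1) * (k - 1).factorial / (p - k).factorial * z ^ (-(k : ℤ))

noncomputable def DJA.aa (z : ℂ) (p k : ℕ) : ℂ :=
  (_root_.digamma (k + 1) + _root_.digamma (k + p + 1)) / (k.factorial * (p + k).factorial) * z ^ k

noncomputable def DJA.TT (z : ℂ) (p : ℕ) : ℂ := ∑' k : ℕ, DJA.aa z p k

lemma DJA.Dm_eq (p : ℕ) (z : ℂ) : Dm p z = DJA.SS z p - DJA.TT z p := rfl

lemma DJA.summable_aa (p : ℕ) (z : ℂ) : Summable (DJA.aa z p) := DJA.summable_a p z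

/- ### algebraic core lemmas -/

lemma DJA.alg2 (D1 D2 Q1 Q2 F G u v c zp z : ℂ) (hF : F ≠ 0) (hG : G ≠ 0) (hu : u ≠ 0)
    (hv0 : v ≠ 0) (hv : v = u + c) (h1 : u * D2 = u * D1 + 1) (h2 : v * Q2 = v * Q1 + 1) :
    c * ((D2 + Q2) / ((u*F)*(v*G)) * (zp*z)) - (D2 + Q1)/((u*F)*G) * (zp*z)
      + z * ((D1 + Q2)/(F*(v*G)) * zp) = 0 := by
  have hden : (u*F)*(v*G) ≠ 0 := mul_ne_zero (mul_ne_zero hu hF) (mul_ne_zero hv0 hG)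
  have E1 : c * ((D2 + Q2) / ((u*F)*(v*G)) * (zp*z))
      = (c*(D2+Q2)*(zp*z)) / ((u*F)*(v*G)) := by ring
  have E2 : (D2 + Q1)/((u*F)*G) * (zp*z) = (v*(D2+Q1)*(zp*z)) / ((u*F)*(v*G)) := by
    rw [eq_div_iff hden]
    field_simp
  have E3 : z * ((D1 + Q2)/(F*(v*G)) * zp) = (u*(D1+Q2)*(zp*z)) / ((u*F)*(v*G)) := by
    rw [eq_div_iff hden]
    field_simp
  rw [E1, E2, E3, div_sub_div_same, ← add_div, div_eq_zero_iff]
  left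
  linear_combination (zp*z)*h2 - (zp*z)*h1 - (zp*z)*(D2+Q2)*hv

/- ### Part B : series identity -/

lemma DJA.keySucc (n j : ℕ) (z : ℂ) :
    ((n:ℂ)+1) * DJA.aa z (n+1) (j+1) - DJA.aa z n (j+1) + z * DJA.aa z (n+2) j = 0 := by
  simp only [DJA.aa]
  push_cast
  have hj1 : ((j:ℂ)+1) ≠ 0 := Nat.cast_add_one_ne_zero j
  have hv0 : ((j:ℂ)+1+(n:ℂ)+1) ≠ 0 := by
    intro h
    have : ((j+n+1 : ℕ):ℂ) + 1 = 0 := by push_cast; rw [← h]; ring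
    exact Nat.cast_add_one_ne_zero _ this
  have hre1 : (0:ℝ) < ((j:ℂ)+1).re := by simp; positivity
  have hre2 : (0:ℝ) < ((j:ℂ)+1+(n:ℂ)+1).re := by simp; positivity
  have h1 : ((j:ℂ)+1) * _root_.digamma ((j:ℂ)+1+1) = ((j:ℂ)+1) * _root_.digamma ((j:ℂ)+1) + 1 := by
    rw [DJA.digamma_rec _ hre1]
    field_simp
  have h2 : ((j:ℂ)+1+(n:ℂ)+1) * _root_.digamma ((j:ℂ)+1+((n:ℂ)+1)+1)
      = ((j:ℂ)+1+(n:ℂ)+1) * _root_.digamma ((j:ℂ)+1+(n:ℂ)+1) + 1 := by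
    rw [show ((j:ℂ)+1+((n:ℂ)+1)+1) = ((j:ℂ)+1+(n:ℂ)+1)+1 by ring, DJA.digamma_rec _ hre2]
    field_simp
  have e3 : _root_.digamma ((j:ℂ) + ((n:ℂ) + 2) + 1) = _root_.digamma ((j:ℂ)+1+((n:ℂ)+1)+1) := by
    rw [show ((j:ℂ) + ((n:ℂ) + 2) + 1) = (j:ℂ)+1+((n:ℂ)+1)+1 by ring]
  have f1 : (((j+1).factorial : ℕ) : ℂ) = ((j:ℂ)+1) * j.factorial := by
    rw [Nat.factorial_succ]; push_cast; ring
  have f2 : (((n+1+(j+1)).factorial : ℕ) : ℂ) = ((j:ℂ)+1+(n:ℂ)+1) * (n+(j+1)).factorial := by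
    rw [show n+1+(j+1) = (n+(j+1))+1 by ring, Nat.factorial_succ]; push_cast; ring
  have f3 : (((n+2+j).factorial : ℕ) : ℂ) = ((j:ℂ)+1+(n:ℂ)+1) * (n+(j+1)).factorial := by
    rw [show n+2+j = (n+(j+1))+1 by ring, Nat.factorial_succ]; push_cast; ring
  have g1 : ((j.factorial : ℕ) : ℂ) ≠ 0 := by exact_mod_cast (Nat.factorial_pos j).ne'
  have g2 : (((n+(j+1)).factorial : ℕ) : ℂ) ≠ 0 := by exact_mod_cast (Nat.factorial_pos _).ne'
  rw [e3, f1, f2, f3, pow_succ]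
  exact DJA.alg2 _ _ _ _ _ _ _ _ _ _ _ g1 g2 hj1 hv0 (by ring) h1 h2

lemma DJA.keyZero (n : ℕ) (z : ℂ) :
    ((n:ℂ)+1) * DJA.aa z (n+1) 0 - DJA.aa z n 0 = 1/(((n+1).factorial : ℕ) : ℂ) := by
  simp only [DJA.aa]
  push_cast
  have hv0 : ((n:ℂ)+1) ≠ 0 := Nat.cast_add_one_ne_zero n
  have hre : (0:ℝ) < ((n:ℂ)+1).re := by simp; positivity
  have h2 : ((n:ℂ)+1) * _root_.digamma ((n:ℂ)+1+1) = ((n:ℂ)+1) * _root_.digamma ((n:ℂ)+1) + 1 := by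
    rw [DJA.digamma_rec _ hre]
    field_simp
  have e2 : _root_.digamma ((0:ℂ) + ((n:ℂ)+1) + 1) = _root_.digamma ((n:ℂ)+1+1) := by
    rw [show ((0:ℂ) + ((n:ℂ)+1) + 1) = (n:ℂ)+1+1 by ring]
  have e1 : _root_.digamma ((0:ℂ) + (n:ℂ) + 1) = _root_.digamma ((n:ℂ)+1) := by
    rw [show ((0:ℂ) + (n:ℂ) + 1) = (n:ℂ)+1 by ring]
  have f2 : (((n+1+0).factorial : ℕ) : ℂ) = ((n:ℂ)+1) * (n+0).factorial := by
    rw [show n+1+0 = (n+0)+1 by ring, Nat.factorial_succ]; push_cast; ring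
  have f3 : (((n+1).factorial : ℕ) : ℂ) = ((n:ℂ)+1) * (n+0).factorial := by
    rw [show n+1 = (n+0)+1 by ring, Nat.factorial_succ]; push_cast; ring
  have g2 : (((n+0).factorial : ℕ) : ℂ) ≠ 0 := by exact_mod_cast (Nat.factorial_pos _).ne'
  rw [e1, e2, f2, pow_zero]
  rw [show ((Nat.factorial 0 : ℕ) : ℂ) = 1 by norm_num]
  have hden : ((n:ℂ)+1) * (((n+0).factorial : ℕ) : ℂ) ≠ 0 := mul_ne_zero hv0 g2
  have E1 : ((n:ℂ)+1) * ((_root_.digamma (0+1) + _root_.digamma ((n:ℂ)+1+1))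
        / (1 * (((n:ℂ)+1) * (((n+0).factorial : ℕ) : ℂ))) * 1)
      = (((n:ℂ)+1) * (_root_.digamma (0+1) + _root_.digamma ((n:ℂ)+1+1)))
        / (((n:ℂ)+1) * (((n+0).factorial : ℕ) : ℂ)) := by
    ring
  have E2 : (_root_.digamma (0+1) + _root_.digamma ((n:ℂ)+1)) / (1 * (((n+0).factorial : ℕ) : ℂ)) * 1
      = (((n:ℂ)+1) * (_root_.digamma (0+1) + _root_.digamma ((n:ℂ)+1)))
        / (((n:ℂ)+1) * (((n+0).factorial : ℕ) : ℂ)) := by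
    rw [one_mul, mul_one]
    exact (mul_div_mul_left _ _ hv0).symm
  rw [E1, E2, div_sub_div_same]
  rw [show ((n:ℂ)+1) * (_root_.digamma (0+1) + _root_.digamma ((n:ℂ)+1+1))
      - ((n:ℂ)+1) * (_root_.digamma (0+1) + _root_.digamma ((n:ℂ)+1)) = 1 by linear_combination h2]

lemma DJA.partB (n : ℕ) (z : ℂ) :
    ((n:ℂ)+1) * DJA.TT z (n+1) - DJA.TT z n + z * DJA.TT z (n+1+1)
      = 1/(((n+1).factorial : ℕ) : ℂ) := by
  have S1 : Summable (DJA.aa z (n+1)) := DJA.summable_aa _ z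
  have S0 : Summable (DJA.aa z n) := DJA.summable_aa _ z
  have S2 : Summable (DJA.aa z (n+2)) := DJA.summable_aa _ z
  have e12 : n+1+1 = n+2 := rfl
  rw [e12]
  simp only [DJA.TT]
  set g : ℕ → ℂ := fun k => if k = 0 then 0 else z * DJA.aa z (n+2) (k-1) with hg
  have hg0 : g 0 = 0 := rfl
  have hgs : ∀ k, g (k+1) = z * DJA.aa z (n+2) k := fun k => rfl
  have Sg : Summable g := by
    refine (summable_nat_add_iff 1).mp ?_
    simpa [hgs] using (S2.mul_left z)
  have hzT : z * (∑' k, DJA.aa z (n+2) k) = ∑' k, g k := by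
    rw [Sg.tsum_eq_zero_add, hg0, zero_add, ← tsum_mul_left]
    exact tsum_congr fun k => (hgs k).symm
  rw [hzT, ← tsum_mul_left, ← Summable.tsum_sub (S1.mul_left ((n:ℂ)+1)) S0,
    ← Summable.tsum_add ((S1.mul_left _).sub S0) Sg]
  have key : ∀ k, ((n:ℂ)+1) * DJA.aa z (n+1) k - DJA.aa z n k + g k
      = if k = 0 then 1/(((n+1).factorial : ℕ) : ℂ) else 0 := by
    intro k
    match k with
    | 0 => simpa [hg0] using DJA.keyZero n z
    | (j+1) =>
      rw [hgs, if_neg (Nat.succ_ne_zero j)]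
      exact DJA.keySucc n j z
  rw [tsum_congr key, tsum_ite_eq]

/- ### Part A : finite sum identity -/

lemma DJA.partA (n : ℕ) (z : ℂ) (hz : z ≠ 0) :
    ((n:ℂ)+1) * DJA.SS z (n+1) - DJA.SS z n + z * DJA.SS z (n+1+1)
      = 1/(((n+1).factorial : ℕ) : ℂ) := by
  have cv : ∀ p : ℕ, DJA.SS z p
      = ∑ i ∈ Finset.range p,
          (-1 : ℂ) ^ i * (i.factorial : ℂ) / (((p-(1+i)).factorial : ℕ) : ℂ)
            * z ^ (-(1+(i:ℤ))) := by
    intro p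
    rw [DJA.SS, ← Finset.Ico_add_one_right_eq_Icc, Finset.sum_Ico_eq_sum_range]
    refine Finset.sum_congr rfl fun i _ => ?_
    rw [Nat.add_sub_cancel_left]
    push_cast
    ring_nf
  rw [cv, cv, cv, show n+1+1 = n+2 from rfl]
  have h3 : z * ∑ i ∈ Finset.range (n+2),
        (-1 : ℂ) ^ i * (i.factorial : ℂ) / ((((n+2)-(1+i)).factorial : ℕ) : ℂ)
          * z ^ (-(1+(i:ℤ)))
      = (∑ i ∈ Finset.range (n+1),
          (-1 : ℂ) ^ (i+1) * ((i+1).factorial : ℂ) / ((((n+2)-(1+(i+1))).factorial : ℕ) : ℂ)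
            * z ^ (-(1+(i:ℤ)))) + 1/(((n+1).factorial : ℕ) : ℂ) := by
    rw [Finset.mul_sum]
    have step : ∀ i : ℕ, z * ((-1 : ℂ) ^ i * (i.factorial : ℂ)
          / ((((n+2)-(1+i)).factorial : ℕ) : ℂ) * z ^ (-(1+(i:ℤ))))
        = (-1 : ℂ) ^ i * (i.factorial : ℂ) / ((((n+2)-(1+i)).factorial : ℕ) : ℂ)
            * z ^ (-(i:ℤ)) := by
      intro i
      rw [show (-(1+(i:ℤ))) = (-(i:ℤ)) + (-1) by ring, zpow_add₀ hz, zpow_neg_one]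
      calc z * ((-1 : ℂ) ^ i * (i.factorial : ℂ) / ((((n+2)-(1+i)).factorial : ℕ) : ℂ)
              * (z ^ (-(i:ℤ)) * z⁻¹))
          = (-1 : ℂ) ^ i * (i.factorial : ℂ) / ((((n+2)-(1+i)).factorial : ℕ) : ℂ)
              * z ^ (-(i:ℤ)) * (z * z⁻¹) := by ring
        _ = _ := by rw [mul_inv_cancel₀ hz, mul_one]
    rw [Finset.sum_congr rfl fun i _ => step i, Finset.sum_range_succ']
    congr 1
    · refine Finset.sum_congr rfl fun i _ => ?_
      congr 1
      push_cast
      ring_nf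
    · norm_num
  rw [h3]
  have main : ∑ i ∈ Finset.range (n+1),
        (((n:ℂ)+1) * ((-1 : ℂ) ^ i * (i.factorial : ℂ)
            / ((((n+1)-(1+i)).factorial : ℕ) : ℂ) * z ^ (-(1+(i:ℤ))))
          + (-1 : ℂ) ^ (i+1) * ((i+1).factorial : ℂ)
            / ((((n+2)-(1+(i+1))).factorial : ℕ) : ℂ) * z ^ (-(1+(i:ℤ))))
      = ∑ i ∈ Finset.range n,
          (-1 : ℂ) ^ i * (i.factorial : ℂ) / (((n-(1+i)).factorial : ℕ) : ℂ)
            * z ^ (-(1+(i:ℤ))) := by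
    rw [Finset.sum_range_succ]
    have last : ((n:ℂ)+1) * ((-1 : ℂ) ^ n * (n.factorial : ℂ)
          / ((((n+1)-(1+n)).factorial : ℕ) : ℂ) * z ^ (-(1+(n:ℤ))))
        + (-1 : ℂ) ^ (n+1) * ((n+1).factorial : ℂ)
          / ((((n+2)-(1+(n+1))).factorial : ℕ) : ℂ) * z ^ (-(1+(n:ℤ))) = 0 := by
      rw [show (n+1)-(1+n) = 0 by omega, show (n+2)-(1+(n+1)) = 0 by omega]
      rw [Nat.factorial_succ, pow_succ]
      push_cast
      ring
    rw [last, add_zero]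
    refine Finset.sum_congr rfl fun i hi => ?_
    have hi' : i < n := Finset.mem_range.mp hi
    obtain ⟨d, hd⟩ : ∃ d, n = i + 1 + d := ⟨n - i - 1, by omega⟩
    rw [show (n+1)-(1+i) = d+1 by omega, show (n+2)-(1+(i+1)) = d+1 by omega,
      show n-(1+i) = d by omega, show ((n:ℂ)+1) = (i:ℂ)+(d:ℂ)+2 by rw [hd]; push_cast; ring]
    rw [Nat.factorial_succ d, Nat.factorial_succ i, pow_succ]
    have gd : ((d.factorial : ℕ) : ℂ) ≠ 0 := by exact_mod_cast (Nat.factorial_pos _).ne'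
    have gd1 : ((d:ℂ)+1) ≠ 0 := Nat.cast_add_one_ne_zero d
    push_cast
    field_simp
    ring
  calc ((n:ℂ)+1) * ∑ i ∈ Finset.range (n+1),
          (-1 : ℂ) ^ i * (i.factorial : ℂ) / ((((n+1)-(1+i)).factorial : ℕ) : ℂ)
            * z ^ (-(1+(i:ℤ)))
        - ∑ i ∈ Finset.range n,
            (-1 : ℂ) ^ i * (i.factorial : ℂ) / (((n-(1+i)).factorial : ℕ) : ℂ)
              * z ^ (-(1+(i:ℤ)))
        + ((∑ i ∈ Finset.range (n+1),
            (-1 : ℂ) ^ (i+1) * ((i+1).factorial : ℂ)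
              / ((((n+2)-(1+(i+1))).factorial : ℕ) : ℂ) * z ^ (-(1+(i:ℤ))))
          + 1/(((n+1).factorial : ℕ) : ℂ))
      = (∑ i ∈ Finset.range (n+1),
          (((n:ℂ)+1) * ((-1 : ℂ) ^ i * (i.factorial : ℂ)
              / ((((n+1)-(1+i)).factorial : ℕ) : ℂ) * z ^ (-(1+(i:ℤ))))
            + (-1 : ℂ) ^ (i+1) * ((i+1).factorial : ℂ)
              / ((((n+2)-(1+(i+1))).factorial : ℕ) : ℂ) * z ^ (-(1+(i:ℤ)))))
        - (∑ i ∈ Finset.range n,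
            (-1 : ℂ) ^ i * (i.factorial : ℂ) / (((n-(1+i)).factorial : ℕ) : ℂ)
              * z ^ (-(1+(i:ℤ))))
        + 1/(((n+1).factorial : ℕ) : ℂ) := by
        rw [Finset.sum_add_distrib, Finset.mul_sum]
        ring
    _ = 1/(((n+1).factorial : ℕ) : ℂ) := by rw [main]; ring

/- ### Main theorem -/

theorem Dm_contiguity (m : ℕ) (hm : 1 ≤ m) (z : ℂ) (hz : z ≠ 0) :
    (m : ℂ) * Dm m z = Dm (m - 1) z - z * Dm (m + 1) z := by
  obtain ⟨n, rfl⟩ : ∃ n, m = n + 1 := ⟨m - 1, (Nat.succ_pred_eq_of_pos hm).symm⟩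
  rw [Nat.add_sub_cancel, DJA.Dm_eq, DJA.Dm_eq, DJA.Dm_eq]
  have hA := DJA.partA n z hz
  have hB := DJA.partB n z
  push_cast
  linear_combination hA - hB
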